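/- Second-price nonlinear single-item smoothness: let C : ℝ → ℝ be a strictly monotone increasing continuous function with C(0)=0 and unbounded above, and let values v : Fin n → ℝ be nonnegative with maximum vₕ attained at index h. For any bid profile a : Fin n → ℝ with all aᵢ ≥ 0, consider the deviation where h bids C⁻¹(vₕ): in a second-price auction (winner = highest bidder, pays disutility C of the second-highest bid), the deviating bidder's utility is at least vₕ − C(max over i of aᵢ). Hence the auction is (1, 0, 1)-smooth with respect to the disutility of the winning bid. -/
import Mathlib


open Finset in
theorem secondprice_nonlinear_smooth (n : ℕ) (hn : 2 ≤ n)
    (C : ℝ → ℝ) (hmono : StrictMono C) (hcont : Continuous C)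
    (hC0 : C 0 = 0) (hunbdd : ∀ M : ℝ, ∃ x : ℝ, M < C x)
    (v : Fin n → ℝ) (hv : ∀ i, 0 ≤ v i)
    (h : Fin n) (hmax : ∀ i, v i ≤ v h) :
    ∃ b : ℝ, 0 ≤ b ∧ C b = v h ∧
      ∀ a : Fin n → ℝ, (∀ i, 0 ≤ a i) →
        ∀ mOpp : ℝ,
          (∀ i, i ≠ h → a i ≤ mOpp) → (∃ i, i ≠ h ∧ a i = mOpp) →
          -- deviation utility: h bids b; wins (ties broken for h) iff mOpp ≤ b,
          -- paying the second-highest bid mOpp; otherwise utility 0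
          (if mOpp ≤ b then v h - C mOpp else 0)
            ≥ v h - C (univ.sup' (by simp [Finset.univ_nonempty_iff]; exact Fin.pos_iff_nonempty.mp (by omega)) a) := by
  -- find b with C b = v h via IVT
  obtain ⟨x, hx⟩ := hunbdd (v h)
  have hx0 : (0:ℝ) ≤ x := by
    by_contra hneg
    push_neg at hneg
    have := hmono hneg
    rw [hC0] at this
    linarith [hv h, hx]
  obtain ⟨b, hb_mem, hb⟩ := intermediate_value_Icc hx0 hcont.continuousOn
    (by rw [hC0]; exact Set.mem_Icc.mpr ⟨hv h, le_of_lt hx⟩)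
  refine ⟨b, hb_mem.1, hb, ?_⟩
  intro a ha mOpp hle ⟨i, hi, hia⟩
  have hsup : mOpp ≤ univ.sup' (by simp [Finset.univ_nonempty_iff]; exact Fin.pos_iff_nonempty.mp (by omega)) a := by
    rw [← hia]; exact le_sup' a (mem_univ i)
  by_cases hc : mOpp ≤ b
  · rw [if_pos hc]
    have := hmono.monotone hsup
    linarith
  · rw [if_neg hc]
    push_neg at hc
    have : C b ≤ C (univ.sup' (by simp [Finset.univ_nonempty_iff]; exact Fin.pos_iff_nonempty.mp (by omega)) a) :=
      hmono.monotone (le_trans hc.le hsup)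
    rw [hb] at this
    linarith
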